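/- Let λ_C, C ranging over the cliques of a connected tree T = (V,E) on V = {1,…,d} with all cliques of size 2, be positive continuous bivariate exponent measure densities (homogeneous of order -3 with unit univariate marginals 1/y²). Then λ(y) = Π_{{i,j}∈E} λ_{ij}(y_i,y_j)/(y_i^{-2} y_j^{-2}) · Π_{i∈V} y_i^{-2} satisfies: for every i ∈ V, ∫_{y : y_i > 1} λ(y) dy = 1 (marginal normalization L2), and λ is homogeneous of order -(d+1). -/

import Mathlib

open Set MeasureTheory
open scoped ENNReal

noncomputable section TreeAux

variable {d : ℕ}

/-- Root factor: `1_{t>0} · t⁻²` as an `ℝ≥0∞`-valued function. -/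
def rootF : ℝ → ℝ≥0∞ := fun t => (Set.Ioi (0:ℝ)).indicator (fun t => ENNReal.ofReal ((t^2)⁻¹)) t

/-- Edge factor: `1_{a,b>0} · λ_i(a,b)·a²` evaluated at `a = y (par i)`, `b = y i`. -/
def edgeF (lamE : Fin d → ℝ → ℝ → ℝ) (par : Fin d → Fin d) (i : Fin d) (y : Fin d → ℝ) : ℝ≥0∞ :=
  ({p : ℝ × ℝ | 0 < p.1 ∧ 0 < p.2}).indicator
    (fun p => ENNReal.ofReal (lamE i p.1 p.2 * p.1 ^ 2)) (y (par i), y i)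

/-- Glued density of the subtree with root `rt` and non-root vertex set `s`. -/
def Phi (lamE : Fin d → ℝ → ℝ → ℝ) (par : Fin d → Fin d) (rt : Fin d) (s : Finset (Fin d))
    (y : Fin d → ℝ) : ℝ≥0∞ :=
  rootF (y rt) * ∏ i ∈ s, edgeF lamE par i y

lemma rootF_of_pos {t : ℝ} (ht : 0 < t) : rootF t = ENNReal.ofReal ((t^2)⁻¹) := by
  simp [rootF, ht]

lemma rootF_of_nonpos {t : ℝ} (ht : ¬ 0 < t) : rootF t = 0 := by
  simp [rootF, ht]

lemma rootF_ne_top (t : ℝ) : rootF t ≠ ⊤ := by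
  by_cases ht : 0 < t
  · simp [rootF_of_pos ht]
  · simp [rootF_of_nonpos ht]

lemma measurable_rootF : Measurable (rootF) := by
  have h : ContinuousOn (fun t : ℝ => ENNReal.ofReal ((t^2)⁻¹)) (Set.Ioi 0) := by
    apply ENNReal.continuous_ofReal.comp_continuousOn
    exact ((continuous_pow 2).continuousOn).inv₀ (fun t ht => pow_ne_zero 2 (ne_of_gt ht))
  have := h.measurable_piecewise (g := fun _ => (0:ℝ≥0∞)) continuousOn_const measurableSet_Ioi
  have heq : rootF = (Set.Ioi (0:ℝ)).piecewise (fun t => ENNReal.ofReal ((t^2)⁻¹))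
      (fun _ => (0:ℝ≥0∞)) := (Set.piecewise_eq_indicator).symm
  rw [heq]; exact this

lemma measurable_edgeF {lamE : Fin d → ℝ → ℝ → ℝ} {par : Fin d → Fin d} {i : Fin d}
    (hci : ContinuousOn (fun p : ℝ × ℝ => lamE i p.1 p.2) {p | 0 < p.1 ∧ 0 < p.2}) :
    Measurable (edgeF lamE par i) := by
  have hQ : IsOpen {p : ℝ × ℝ | 0 < p.1 ∧ 0 < p.2} := by
    exact (isOpen_lt continuous_const continuous_fst).inter
      (isOpen_lt continuous_const continuous_snd)
  have h : ContinuousOn (fun p : ℝ × ℝ => ENNReal.ofReal (lamE i p.1 p.2 * p.1 ^ 2))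
      {p : ℝ × ℝ | 0 < p.1 ∧ 0 < p.2} := by
    apply ENNReal.continuous_ofReal.comp_continuousOn
    exact hci.mul (((continuous_fst.pow 2)).continuousOn)
  have hmeas : Measurable (({p : ℝ × ℝ | 0 < p.1 ∧ 0 < p.2}).indicator
      (fun p => ENNReal.ofReal (lamE i p.1 p.2 * p.1 ^ 2))) := by
    have hm := h.measurable_piecewise (g := fun _ => (0:ℝ≥0∞)) continuousOn_const hQ.measurableSet
    have heq : ({p : ℝ × ℝ | 0 < p.1 ∧ 0 < p.2}).indicator
        (fun p => ENNReal.ofReal (lamE i p.1 p.2 * p.1 ^ 2)) =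
        ({p : ℝ × ℝ | 0 < p.1 ∧ 0 < p.2}).piecewise
        (fun p => ENNReal.ofReal (lamE i p.1 p.2 * p.1 ^ 2)) (fun _ => 0) :=
      (Set.piecewise_eq_indicator).symm
    rw [heq]; exact hm
  exact hmeas.comp ((measurable_pi_apply _).prodMk (measurable_pi_apply _))

lemma edgeF_ne_top (lamE : Fin d → ℝ → ℝ → ℝ) (par : Fin d → Fin d) (i : Fin d)
    (y : Fin d → ℝ) : edgeF lamE par i y ≠ ⊤ := by
  unfold edgeF
  by_cases h : (y (par i), y i) ∈ {p : ℝ × ℝ | 0 < p.1 ∧ 0 < p.2}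
  · rw [Set.indicator_of_mem h]; exact ENNReal.ofReal_ne_top
  · rw [Set.indicator_of_notMem h]; simp

lemma measurable_Phi {lamE : Fin d → ℝ → ℝ → ℝ} {par : Fin d → Fin d} {rt : Fin d}
    {s : Finset (Fin d)}
    (hc : ∀ i ∈ s, ContinuousOn (fun p : ℝ × ℝ => lamE i p.1 p.2) {p | 0 < p.1 ∧ 0 < p.2}) :
    Measurable (Phi lamE par rt s) := by
  apply Measurable.mul
  · exact measurable_rootF.comp (measurable_pi_apply rt)
  · exact Finset.measurable_prod _ (fun i hi => measurable_edgeF (hc i hi))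

lemma Phi_ne_top (lamE : Fin d → ℝ → ℝ → ℝ) (par : Fin d → Fin d) (rt : Fin d)
    (s : Finset (Fin d)) (y : Fin d → ℝ) : Phi lamE par rt s y ≠ ⊤ := by
  apply ENNReal.mul_ne_top (rootF_ne_top _)
  exact (ENNReal.prod_lt_top (fun i _ => (edgeF_ne_top lamE par i y).lt_top)).ne

lemma Phi_eq_zero {lamE : Fin d → ℝ → ℝ → ℝ} {par : Fin d → Fin d} {rt j : Fin d}
    {s : Finset (Fin d)} {y : Fin d → ℝ} (hy : ¬ 0 < y j) (hj : j = rt ∨ j ∈ s) :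
    Phi lamE par rt s y = 0 := by
  rcases hj with rfl | hj
  · rw [Phi, rootF_of_nonpos hy, zero_mul]
  · rw [Phi, Finset.prod_eq_zero hj, mul_zero]
    rw [edgeF, Set.indicator_of_notMem]
    intro h
    exact hy h.2


lemma integrableOn_of_setIntegral_ne_zero {f : ℝ → ℝ} {c : ℝ}
    (h : ∫ b in Ioi (0:ℝ), f b = c) (hc : c ≠ 0) : IntegrableOn f (Ioi 0) := by
  by_contra hint
  rw [MeasureTheory.integral_undef hint] at h
  exact hc h.symm

lemma lint_ofReal_Ioi {f : ℝ → ℝ} (hf : IntegrableOn f (Ioi 0))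
    (hnn : ∀ t ∈ Ioi (0:ℝ), 0 ≤ f t) :
    ∫⁻ t in Ioi (0:ℝ), ENNReal.ofReal (f t) = ENNReal.ofReal (∫ t in Ioi (0:ℝ), f t) :=
  (ofReal_integral_eq_lintegral_ofReal hf
    ((ae_restrict_iff' measurableSet_Ioi).mpr (ae_of_all _ hnn))).symm

/-- Integrating the edge factor over the child variable gives the positivity
indicator of the parent variable. -/
lemma edge_lintegral {lamE : Fin d → ℝ → ℝ → ℝ} {r i : Fin d} (hir : i ≠ r)
    (hpos : ∀ i, i ≠ r → ∀ a b : ℝ, 0 < a → 0 < b → 0 < lamE i a b)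
    (hmarg1 : ∀ i, i ≠ r → ∀ a : ℝ, 0 < a → ∫ b in Ioi (0:ℝ), lamE i a b = (a ^ 2)⁻¹)
    (a : ℝ) :
    ∫⁻ t : ℝ, ({p : ℝ × ℝ | 0 < p.1 ∧ 0 < p.2}).indicator
      (fun p => ENNReal.ofReal (lamE i p.1 p.2 * p.1 ^ 2)) (a, t)
      = (Set.Ioi (0:ℝ)).indicator 1 a := by
  by_cases ha : 0 < a
  · have h1 : ∀ t : ℝ, ({p : ℝ × ℝ | 0 < p.1 ∧ 0 < p.2}).indicator
        (fun p => ENNReal.ofReal (lamE i p.1 p.2 * p.1 ^ 2)) (a, t)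
        = (Ioi (0:ℝ)).indicator (fun t => ENNReal.ofReal (lamE i a t * a ^ 2)) t := by
      intro t
      by_cases ht : 0 < t <;> simp [Set.indicator_apply, ha, ht]
    simp_rw [h1]
    rw [lintegral_indicator measurableSet_Ioi]
    have h2 : ∀ t ∈ Ioi (0:ℝ), ENNReal.ofReal (lamE i a t * a ^ 2)
        = ENNReal.ofReal (lamE i a t) * ENNReal.ofReal (a ^ 2) := fun t ht =>
      ENNReal.ofReal_mul (le_of_lt (hpos i hir a t ha ht))
    rw [setLIntegral_congr_fun measurableSet_Ioi h2,
      lintegral_mul_const' _ _ ENNReal.ofReal_ne_top]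
    have hInt : IntegrableOn (fun t => lamE i a t) (Ioi 0) :=
      integrableOn_of_setIntegral_ne_zero (hmarg1 i hir a ha) (by positivity)
    rw [lint_ofReal_Ioi hInt (fun t ht => (hpos i hir a t ha ht).le), hmarg1 i hir a ha,
      ← ENNReal.ofReal_mul (by positivity), inv_mul_cancel₀ (by positivity)]
    simp [Set.indicator_of_mem (mem_Ioi.mpr ha)]
  · have h1 : ∀ t : ℝ, ({p : ℝ × ℝ | 0 < p.1 ∧ 0 < p.2}).indicator
        (fun p => ENNReal.ofReal (lamE i p.1 p.2 * p.1 ^ 2)) (a, t) = 0 := by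
      intro t; simp [Set.indicator_apply, ha]
    simp [h1, Set.indicator_apply, ha]

/-- Integrating the old root factor against the edge factor of a child `v`
over the root variable gives the root factor of `v`. -/
lemma root_lintegral {lamE : Fin d → ℝ → ℝ → ℝ} {r v : Fin d} (hvr : v ≠ r)
    (hpos : ∀ i, i ≠ r → ∀ a b : ℝ, 0 < a → 0 < b → 0 < lamE i a b)
    (hmarg2 : ∀ i, i ≠ r → ∀ b : ℝ, 0 < b → ∫ a in Ioi (0:ℝ), lamE i a b = (b ^ 2)⁻¹)
    (b : ℝ) :
    ∫⁻ t : ℝ, rootF t * ({p : ℝ × ℝ | 0 < p.1 ∧ 0 < p.2}).indicator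
      (fun p => ENNReal.ofReal (lamE v p.1 p.2 * p.1 ^ 2)) (t, b) = rootF b := by
  by_cases hb : 0 < b
  · have h1 : ∀ t : ℝ, rootF t * ({p : ℝ × ℝ | 0 < p.1 ∧ 0 < p.2}).indicator
        (fun p => ENNReal.ofReal (lamE v p.1 p.2 * p.1 ^ 2)) (t, b)
        = (Ioi (0:ℝ)).indicator (fun t => ENNReal.ofReal (lamE v t b)) t := by
      intro t
      by_cases ht : 0 < t
      · rw [rootF_of_pos ht, Set.indicator_of_mem (by exact ⟨ht, hb⟩ : (t,b) ∈ _),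
          Set.indicator_of_mem (mem_Ioi.mpr ht), ← ENNReal.ofReal_mul (by positivity)]
        congr 1
        field_simp
      · simp [rootF_of_nonpos ht, Set.indicator_apply, ht]
    simp_rw [h1]
    rw [lintegral_indicator measurableSet_Ioi]
    have hInt : IntegrableOn (fun t => lamE v t b) (Ioi 0) :=
      integrableOn_of_setIntegral_ne_zero (hmarg2 v hvr b hb) (by positivity)
    rw [lint_ofReal_Ioi hInt (fun t ht => (hpos v hvr t b ht hb).le), hmarg2 v hvr b hb,
      rootF_of_pos hb]
  · have h1 : ∀ t : ℝ, rootF t * ({p : ℝ × ℝ | 0 < p.1 ∧ 0 < p.2}).indicator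
        (fun p => ENNReal.ofReal (lamE v p.1 p.2 * p.1 ^ 2)) (t, b) = 0 := by
      intro t; simp [Set.indicator_apply, hb]
    simp [h1, rootF_of_nonpos hb]


lemma Phi_update {lamE : Fin d → ℝ → ℝ → ℝ} {par : Fin d → Fin d} {rt c : Fin d}
    {s : Finset (Fin d)} (hc : c ∈ s) (hrt : rt ≠ c) (hparc : par c ≠ c)
    (hpj : ∀ j ∈ s.erase c, par j ≠ c) (y : Fin d → ℝ) (t : ℝ) :
    Phi lamE par rt s (Function.update y c t) =
      Phi lamE par rt (s.erase c) y *
      ({p : ℝ × ℝ | 0 < p.1 ∧ 0 < p.2}).indicator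
        (fun p => ENNReal.ofReal (lamE c p.1 p.2 * p.1 ^ 2)) (y (par c), t) := by
  unfold Phi
  have hprod : ∀ j ∈ s.erase c,
      edgeF lamE par j (Function.update y c t) = edgeF lamE par j y := by
    intro j hj
    have hj1 : j ≠ c := (Finset.mem_erase.mp hj).1
    unfold edgeF
    rw [Function.update_of_ne (hpj j hj), Function.update_of_ne hj1]
  have hedge : edgeF lamE par c (Function.update y c t) =
      ({p : ℝ × ℝ | 0 < p.1 ∧ 0 < p.2}).indicator
        (fun p => ENNReal.ofReal (lamE c p.1 p.2 * p.1 ^ 2)) (y (par c), t) := by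
    unfold edgeF
    rw [Function.update_of_ne hparc, Function.update_self]
  rw [← Finset.mul_prod_erase s _ hc, Finset.prod_congr rfl hprod, hedge,
    Function.update_of_ne hrt]
  ring

lemma lmarginal_step_child {lamE : Fin d → ℝ → ℝ → ℝ} {par : Fin d → Fin d}
    {r rt c : Fin d} {s : Finset (Fin d)}
    (hpos : ∀ i, i ≠ r → ∀ a b : ℝ, 0 < a → 0 < b → 0 < lamE i a b)
    (hmarg1 : ∀ i, i ≠ r → ∀ a : ℝ, 0 < a → ∫ b in Ioi (0:ℝ), lamE i a b = (a ^ 2)⁻¹)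
    (hcr : c ≠ r) (hc : c ∈ s) (hrt : rt ≠ c) (hparc : par c ≠ c)
    (hpj : ∀ j ∈ s.erase c, par j ≠ c) (habs : par c = rt ∨ par c ∈ s.erase c) :
    (∫⋯∫⁻_{c}, Phi lamE par rt s) = Phi lamE par rt (s.erase c) := by
  funext y
  rw [lmarginal_singleton]
  simp_rw [Phi_update hc hrt hparc hpj y]
  rw [lintegral_const_mul' _ _ (Phi_ne_top lamE par rt (s.erase c) y),
    edge_lintegral hcr hpos hmarg1 (y (par c))]
  by_cases hp : 0 < y (par c)
  · rw [Set.indicator_of_mem (mem_Ioi.mpr hp)]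
    simp
  · rw [Phi_eq_zero hp habs, zero_mul]

lemma lmarginal_step_root {lamE : Fin d → ℝ → ℝ → ℝ} {par : Fin d → Fin d}
    {r p v : Fin d} {s : Finset (Fin d)}
    (hpos : ∀ i, i ≠ r → ∀ a b : ℝ, 0 < a → 0 < b → 0 < lamE i a b)
    (hmarg2 : ∀ i, i ≠ r → ∀ b : ℝ, 0 < b → ∫ a in Ioi (0:ℝ), lamE i a b = (b ^ 2)⁻¹)
    (hvr : v ≠ r) (hv : v ∈ s) (hp : p ∉ s) (hpv : par v = p)
    (hpj : ∀ j ∈ s.erase v, par j ≠ p) :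
    (∫⋯∫⁻_{p}, Phi lamE par p s) = Phi lamE par v (s.erase v) := by
  funext y
  rw [lmarginal_singleton]
  have hvp : v ≠ p := fun h => hp (h ▸ hv)
  have hfact : ∀ t : ℝ, Phi lamE par p s (Function.update y p t) =
      (rootF t * ({q : ℝ × ℝ | 0 < q.1 ∧ 0 < q.2}).indicator
        (fun q => ENNReal.ofReal (lamE v q.1 q.2 * q.1 ^ 2)) (t, y v)) *
      ∏ j ∈ s.erase v, edgeF lamE par j y := by
    intro t
    unfold Phi
    have hprod : ∀ j ∈ s.erase v,
        edgeF lamE par j (Function.update y p t) = edgeF lamE par j y := by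
      intro j hj
      have hj1 : j ≠ p := fun h => hp (h ▸ (Finset.mem_erase.mp hj).2)
      unfold edgeF
      rw [Function.update_of_ne (hpj j hj), Function.update_of_ne hj1]
    have hedge : edgeF lamE par v (Function.update y p t) =
        ({q : ℝ × ℝ | 0 < q.1 ∧ 0 < q.2}).indicator
          (fun q => ENNReal.ofReal (lamE v q.1 q.2 * q.1 ^ 2)) (t, y v) := by
      unfold edgeF
      rw [hpv, Function.update_self, Function.update_of_ne hvp]
    rw [← Finset.mul_prod_erase s _ hv, Finset.prod_congr rfl hprod, hedge,
      Function.update_self]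
    ring
  simp_rw [hfact]
  rw [lintegral_mul_const' _ _
      (ENNReal.prod_lt_top (fun i _ => (edgeF_ne_top lamE par i y).lt_top)).ne,
    root_lintegral hvr hpos hmarg2 (y v)]
  rfl


section Tree

variable {r : Fin d} {par : Fin d → Fin d} {anc : Fin d → Finset (Fin d)}

lemma par_ne (hanc : ∀ i, i ≠ r → anc i = insert i (anc (par i)) ∧ i ∉ anc (par i) ∧ r ∉ anc i)
    {i : Fin d} (hi : i ≠ r) : par i ≠ i := by
  obtain ⟨h1, h2, -⟩ := hanc i hi
  intro h
  rw [h] at h1 h2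
  exact h2 (h1 ▸ Finset.mem_insert_self i (anc i))

lemma card_anc (hanc : ∀ i, i ≠ r → anc i = insert i (anc (par i)) ∧ i ∉ anc (par i) ∧ r ∉ anc i)
    {i : Fin d} (hi : i ≠ r) : (anc i).card = (anc (par i)).card + 1 := by
  obtain ⟨h1, h2, -⟩ := hanc i hi
  rw [h1, Finset.card_insert_of_notMem h2]

lemma mem_anc_self
    (hanc : ∀ i, i ≠ r → anc i = insert i (anc (par i)) ∧ i ∉ anc (par i) ∧ r ∉ anc i)
    {i : Fin d} (hi : i ≠ r) : i ∈ anc i := by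
  obtain ⟨h1, -, -⟩ := hanc i hi
  exact h1 ▸ Finset.mem_insert_self _ _

lemma root_not_mem_anc (hanc0 : anc r = ∅)
    (hanc : ∀ i, i ≠ r → anc i = insert i (anc (par i)) ∧ i ∉ anc (par i) ∧ r ∉ anc i)
    (k : Fin d) : r ∉ anc k := by
  by_cases hk : k = r
  · subst hk; simp [hanc0]
  · exact (hanc k hk).2.2

lemma mem_anc_ne_root (hanc0 : anc r = ∅)
    (hanc : ∀ i, i ≠ r → anc i = insert i (anc (par i)) ∧ i ∉ anc (par i) ∧ r ∉ anc i)
    {k v : Fin d} (hv : v ∈ anc k) : v ≠ r := by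
  rintro rfl; exact root_not_mem_anc hanc0 hanc k hv

lemma anc_trans (hanc0 : anc r = ∅)
    (hanc : ∀ i, i ≠ r → anc i = insert i (anc (par i)) ∧ i ∉ anc (par i) ∧ r ∉ anc i) :
    ∀ n (k : Fin d), (anc k).card = n → ∀ v ∈ anc k, anc v ⊆ anc k := by
  intro n
  induction n using Nat.strong_induction_on with
  | _ n ih =>
    intro k hn v hv
    by_cases hk : k = r
    · subst hk; rw [hanc0] at hv; exact absurd hv (Finset.notMem_empty v)
    · obtain ⟨h1, h2, -⟩ := hanc k hk
      rw [h1] at hv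
      rcases Finset.mem_insert.mp hv with rfl | hv'
      · exact Finset.Subset.refl _
      · have hc : (anc (par k)).card < n := by
          rw [← hn, card_anc hanc hk]; omega
        exact (ih _ hc (par k) rfl v hv').trans (h1 ▸ Finset.subset_insert _ _)

lemma card_lt_of_mem_anc (hanc0 : anc r = ∅)
    (hanc : ∀ i, i ≠ r → anc i = insert i (anc (par i)) ∧ i ∉ anc (par i) ∧ r ∉ anc i)
    {v w : Fin d} (hv : v ∈ anc w) : v = w ∨ (anc v).card < (anc w).card := by
  by_cases hw : w = r
  · subst hw; rw [hanc0] at hv; exact absurd hv (Finset.notMem_empty v)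
  · obtain ⟨h1, h2, -⟩ := hanc w hw
    rw [h1] at hv
    rcases Finset.mem_insert.mp hv with rfl | hv'
    · exact Or.inl rfl
    · right
      have := Finset.card_le_card (anc_trans hanc0 hanc _ (par w) rfl v hv')
      rw [card_anc hanc hw]; omega

lemma anc_chain (hanc0 : anc r = ∅)
    (hanc : ∀ i, i ≠ r → anc i = insert i (anc (par i)) ∧ i ∉ anc (par i) ∧ r ∉ anc i) :
    ∀ n (k : Fin d), (anc k).card = n →
      ∀ v ∈ anc k, ∀ w ∈ anc k, v ∈ anc w ∨ w ∈ anc v := by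
  intro n
  induction n using Nat.strong_induction_on with
  | _ n ih =>
    intro k hn v hv w hw
    by_cases hk : k = r
    · subst hk; rw [hanc0] at hv; exact absurd hv (Finset.notMem_empty v)
    · obtain ⟨h1, h2, -⟩ := hanc k hk
      rw [h1] at hv hw
      rcases Finset.mem_insert.mp hv with rfl | hv'
      · rcases Finset.mem_insert.mp hw with rfl | hw'
        · exact Or.inl (mem_anc_self hanc hk)
        · exact Or.inr (h1 ▸ Finset.mem_insert_of_mem hw')
      · rcases Finset.mem_insert.mp hw with rfl | hw'
        · exact Or.inl (h1 ▸ Finset.mem_insert_of_mem hv')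
        · have hc : (anc (par k)).card < n := by
            rw [← hn, card_anc hanc hk]; omega
          exact ih _ hc (par k) rfl v hv' w hw'

lemma par_mem_anc
    (hanc : ∀ i, i ≠ r → anc i = insert i (anc (par i)) ∧ i ∉ anc (par i) ∧ r ∉ anc i)
    {i : Fin d} (hi : i ≠ r) : par i = r ∨ par i ∈ anc i := by
  by_cases hp : par i = r
  · exact Or.inl hp
  · right
    obtain ⟨h1, -, -⟩ := hanc i hi
    exact h1 ▸ Finset.mem_insert_of_mem (mem_anc_self hanc hp)

end Tree


lemma claimA {lamE : Fin d → ℝ → ℝ → ℝ} {r : Fin d} {par : Fin d → Fin d}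
    {anc : Fin d → Finset (Fin d)}
    (hanc : ∀ i, i ≠ r → anc i = insert i (anc (par i)) ∧ i ∉ anc (par i) ∧ r ∉ anc i)
    (hcont : ∀ i, i ≠ r →
      ContinuousOn (fun p : ℝ × ℝ => lamE i p.1 p.2) {p | 0 < p.1 ∧ 0 < p.2})
    (hpos : ∀ i, i ≠ r → ∀ a b : ℝ, 0 < a → 0 < b → 0 < lamE i a b)
    (hmarg1 : ∀ i, i ≠ r → ∀ a : ℝ, 0 < a → ∫ b in Ioi (0:ℝ), lamE i a b = (a ^ 2)⁻¹) :
    ∀ n (u : Finset (Fin d)), u.card = n →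
      (∀ j ∈ u, ∀ c : Fin d, c ≠ r → par c = j → c ∈ u) → r ∉ u →
      (∫⋯∫⁻_u, Phi lamE par r (Finset.univ.erase r))
        = Phi lamE par r ((Finset.univ.erase r) \ u) := by
  intro n
  induction n using Nat.strong_induction_on with
  | _ n ih =>
    intro u hcard hgood hru
    rcases Finset.eq_empty_or_nonempty u with rfl | hne
    · simp
    · obtain ⟨i, hiu, hmin⟩ := u.exists_min_image (fun j => (anc j).card) hne
      have hir : i ≠ r := fun h => hru (h ▸ hiu)
      have hu : u = insert i (u.erase i) := (Finset.insert_erase hiu).symm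
      have hcard' : (u.erase i).card < n := by
        rw [← hcard]
        exact Finset.card_lt_card (Finset.erase_ssubset hiu)
      have hgood' : ∀ j ∈ u.erase i, ∀ c : Fin d, c ≠ r → par c = j → c ∈ u.erase i := by
        intro j hj c hcr hpc
        have hcu : c ∈ u := hgood j (Finset.mem_of_mem_erase hj) c hcr hpc
        have hci : c ≠ i := by
          intro h
          have h1 : (anc c).card = (anc j).card + 1 := by
            rw [card_anc hanc hcr, hpc]
          have h2 := hmin j (Finset.mem_of_mem_erase hj)
          rw [h] at h1
          have h3 := hmin i hiu
          omega
        exact Finset.mem_erase.mpr ⟨hci, hcu⟩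
      have hru' : r ∉ u.erase i := fun h => hru (Finset.mem_of_mem_erase h)
      have hmeas : Measurable (Phi lamE par r (Finset.univ.erase r)) :=
        measurable_Phi (fun j hj => hcont j (Finset.mem_erase.mp hj).1)
      rw [hu, Finset.insert_eq,
        lmarginal_union _ _ hmeas (Finset.disjoint_singleton_left.mpr (Finset.notMem_erase i u)),
        ih _ hcard' (u.erase i) rfl hgood' hru']
      have hpari : par i ≠ i := par_ne hanc hir
      have hstep := lmarginal_step_child (r := r) (rt := r)
        (s := (Finset.univ.erase r) \ (u.erase i)) (c := i) hpos hmarg1 hir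
        (by
          rw [Finset.mem_sdiff]
          exact ⟨Finset.mem_erase.mpr ⟨hir, Finset.mem_univ i⟩, Finset.notMem_erase i u⟩)
        (Ne.symm hir) hpari
        (by
          intro j hj hpar
          obtain ⟨hji, hj2⟩ := Finset.mem_erase.mp hj
          obtain ⟨hj3, hj4⟩ := Finset.mem_sdiff.mp hj2
          have hjr : j ≠ r := (Finset.mem_erase.mp hj3).1
          have : j ∈ u := hgood i hiu j hjr hpar
          exact hj4 (Finset.mem_erase.mpr ⟨hji, this⟩))
        (by
          by_cases hp : par i = r
          · exact Or.inl hp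
          · right
            refine Finset.mem_erase.mpr ⟨hpari, Finset.mem_sdiff.mpr
              ⟨Finset.mem_erase.mpr ⟨hp, Finset.mem_univ _⟩, ?_⟩⟩
            intro hmem
            have h1 := hmin (par i) (Finset.mem_of_mem_erase hmem)
            have h2 : (anc i).card = (anc (par i)).card + 1 := card_anc hanc hir
            omega)
      have hset : ((Finset.univ.erase r) \ (u.erase i)).erase i
          = (Finset.univ.erase r) \ u := by
        ext a
        simp only [Finset.mem_erase, Finset.mem_sdiff]
        constructor
        · rintro ⟨hai, ⟨har, -⟩, hau'⟩
          refine ⟨⟨har, Finset.mem_univ a⟩, ?_⟩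
          intro hau
          exact hau' ⟨hai, hau⟩
        · rintro ⟨⟨har, -⟩, hau⟩
          refine ⟨fun h => hau (h ▸ hiu), ⟨har, Finset.mem_univ a⟩, ?_⟩
          intro h
          exact hau h.2
      rw [hstep, hset, ← Finset.insert_eq, ← hu]


lemma claimB {lamE : Fin d → ℝ → ℝ → ℝ} {r : Fin d} {par : Fin d → Fin d}
    {anc : Fin d → Finset (Fin d)} (hanc0 : anc r = ∅)
    (hanc : ∀ i, i ≠ r → anc i = insert i (anc (par i)) ∧ i ∉ anc (par i) ∧ r ∉ anc i)
    (hcont : ∀ i, i ≠ r →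
      ContinuousOn (fun p : ℝ × ℝ => lamE i p.1 p.2) {p | 0 < p.1 ∧ 0 < p.2})
    (hpos : ∀ i, i ≠ r → ∀ a b : ℝ, 0 < a → 0 < b → 0 < lamE i a b)
    (hmarg2 : ∀ i, i ≠ r → ∀ b : ℝ, 0 < b → ∫ a in Ioi (0:ℝ), lamE i a b = (b ^ 2)⁻¹)
    (k : Fin d) :
    ∀ n (v : Fin d), v ∈ insert r (anc k) → (anc v).card = n →
      (∫⋯∫⁻_((insert r (anc k)) \ (insert v (anc k \ anc v))), Phi lamE par r (anc k))
        = Phi lamE par v (anc k \ anc v) := by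
  have hmeasA : Measurable (Phi lamE par r (anc k)) :=
    measurable_Phi (fun j hj => hcont j (mem_anc_ne_root hanc0 hanc hj))
  intro n
  induction n using Nat.strong_induction_on with
  | _ n ih =>
    intro v hv hn
    by_cases hvr : v = r
    · subst hvr
      rw [hanc0, Finset.sdiff_empty, Finset.sdiff_self, lmarginal_empty]
    · have hvk : v ∈ anc k := (Finset.mem_insert.mp hv).resolve_left hvr
      obtain ⟨h1, h2, h3⟩ := hanc v hvr
      have hpk : par v = r ∨ par v ∈ anc k := by
        rcases par_mem_anc hanc hvr with hp | hp
        · exact Or.inl hp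
        · exact Or.inr (anc_trans hanc0 hanc _ k rfl v hvk hp)
      have hpA : par v ∈ insert r (anc k) := by
        rcases hpk with hp | hp
        · exact hp ▸ Finset.mem_insert_self _ _
        · exact Finset.mem_insert_of_mem hp
      have hcardp : (anc (par v)).card < n := by
        rw [← hn, card_anc hanc hvr]; omega
      have IH := ih _ hcardp (par v) hpA rfl
      have hvm : v ∈ anc k \ anc (par v) := Finset.mem_sdiff.mpr ⟨hvk, h2⟩
      have hsd : anc k \ anc v = (anc k \ anc (par v)).erase v := by
        rw [h1]
        ext a
        simp only [Finset.mem_sdiff, Finset.mem_erase, Finset.mem_insert]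
        tauto
      have hpnot : par v ∉ anc k \ anc (par v) := by
        by_cases hp : par v = r
        · rw [hp]
          intro hmem
          exact root_not_mem_anc hanc0 hanc k (Finset.mem_sdiff.mp hmem).1
        · intro hmem
          exact (Finset.mem_sdiff.mp hmem).2 (mem_anc_self hanc hp)
      have hRv : insert v (anc k \ anc v) = anc k \ anc (par v) := by
        rw [hsd, Finset.insert_erase hvm]
      have hAsplit : (insert r (anc k)) \ (anc k \ anc (par v))
          = ((insert r (anc k)) \ (insert (par v) (anc k \ anc (par v)))) ∪ {par v} := by
        ext a
        by_cases hap : a = par v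
        · subst hap
          constructor
          · intro _
            exact Finset.mem_union_right _ (Finset.mem_singleton_self _)
          · intro _
            exact Finset.mem_sdiff.mpr ⟨hpA, hpnot⟩
        · simp only [Finset.mem_sdiff, Finset.mem_union, Finset.mem_singleton,
            Finset.mem_insert, hap]
          tauto
      rw [hRv, hAsplit,
        lmarginal_union' _ _ hmeasA
          (Finset.disjoint_singleton_right.mpr
            (by
              intro hmem
              exact (Finset.mem_sdiff.mp hmem).2 (Finset.mem_insert_self _ _))),
        IH]
      have hstep := lmarginal_step_root (r := r) (p := par v) (v := v)
        (s := anc k \ anc (par v)) hpos hmarg2 hvr hvm hpnot rfl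
        (by
          intro j hj hparj
          obtain ⟨hjv, hj2⟩ := Finset.mem_erase.mp hj
          obtain ⟨hjk, hjp⟩ := Finset.mem_sdiff.mp hj2
          have hjr : j ≠ r := mem_anc_ne_root hanc0 hanc hjk
          have hcj : (anc j).card = (anc (par v)).card + 1 := by
            rw [card_anc hanc hjr, hparj]
          have hcv : (anc v).card = (anc (par v)).card + 1 := card_anc hanc hvr
          rcases anc_chain hanc0 hanc _ k rfl j hjk v hvk with hm | hm
          · rcases card_lt_of_mem_anc hanc0 hanc hm with h | h
            · exact hjv h
            · omega
          · rcases card_lt_of_mem_anc hanc0 hanc hm with h | h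
            · exact hjv h.symm
            · omega)
      rw [hstep, ← hsd]


/-- The indicator of `{y k > 1}` can be pulled out of a marginal over variables other
than `k`. -/
lemma lmarginal_pull {s : Finset (Fin d)} {k : Fin d} (hk : k ∉ s)
    (g : (Fin d → ℝ) → ℝ≥0∞) :
    (∫⋯∫⁻_s, (fun y => (Set.Ioi (1:ℝ)).indicator (fun _ => (1:ℝ≥0∞)) (y k) * g y))
      = fun y => (Set.Ioi (1:ℝ)).indicator (fun _ => (1:ℝ≥0∞)) (y k) * (∫⋯∫⁻_s, g) y := by
  funext y
  have h : ∀ z, Function.updateFinset y s z k = y k := by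
    intro z; simp [Function.updateFinset, hk]
  simp only [lmarginal]
  simp_rw [h]
  refine lintegral_const_mul' _ _ ?_
  by_cases h1 : (1:ℝ) < y k <;> simp [Set.indicator_apply, h1]

lemma assembly {lamE : Fin d → ℝ → ℝ → ℝ} {r : Fin d} {par : Fin d → Fin d}
    {anc : Fin d → Finset (Fin d)} (hanc0 : anc r = ∅)
    (hanc : ∀ i, i ≠ r → anc i = insert i (anc (par i)) ∧ i ∉ anc (par i) ∧ r ∉ anc i)
    (hcont : ∀ i, i ≠ r →
      ContinuousOn (fun p : ℝ × ℝ => lamE i p.1 p.2) {p | 0 < p.1 ∧ 0 < p.2})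
    (hpos : ∀ i, i ≠ r → ∀ a b : ℝ, 0 < a → 0 < b → 0 < lamE i a b)
    (hmarg1 : ∀ i, i ≠ r → ∀ a : ℝ, 0 < a → ∫ b in Ioi (0:ℝ), lamE i a b = (a ^ 2)⁻¹)
    (hmarg2 : ∀ i, i ≠ r → ∀ b : ℝ, 0 < b → ∫ a in Ioi (0:ℝ), lamE i a b = (b ^ 2)⁻¹)
    (k : Fin d) :
    ∫⁻ y : Fin d → ℝ, (Set.Ioi (1:ℝ)).indicator (fun _ => (1:ℝ≥0∞)) (y k)
      * Phi lamE par r (Finset.univ.erase r) y = 1 := by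
  classical
  set A : Finset (Fin d) := insert r (anc k) with hA
  have hrk : r ∉ anc k := root_not_mem_anc hanc0 hanc k
  have hkA : k ∈ A := by
    by_cases hk : k = r
    · exact hk ▸ Finset.mem_insert_self _ _
    · exact Finset.mem_insert_of_mem (mem_anc_self hanc hk)
  have hmeas0 : Measurable (Phi lamE par r (Finset.univ.erase r)) :=
    measurable_Phi (fun j hj => hcont j (Finset.mem_erase.mp hj).1)
  have hmeasF : Measurable (fun y : Fin d → ℝ =>
      (Set.Ioi (1:ℝ)).indicator (fun _ => (1:ℝ≥0∞)) (y k)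
        * Phi lamE par r (Finset.univ.erase r) y) := by
    apply Measurable.mul ?_ hmeas0
    exact (measurable_const.indicator measurableSet_Ioi).comp (measurable_pi_apply k)
  set Phi0 := Phi lamE par r (Finset.univ.erase r) with hPhi0
  -- Claim A applied to `univ \ A`
  have hgoodA : ∀ j ∈ Finset.univ \ A, ∀ c : Fin d, c ≠ r → par c = j →
      c ∈ Finset.univ \ A := by
    intro j hj c hcr hpc
    refine Finset.mem_sdiff.mpr ⟨Finset.mem_univ _, ?_⟩
    intro hcA
    apply (Finset.mem_sdiff.mp hj).2
    have hck : c ∈ anc k := (Finset.mem_insert.mp hcA).resolve_left hcr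
    rcases par_mem_anc hanc hcr with hp | hp
    · rw [← hpc, hp]; exact Finset.mem_insert_self _ _
    · rw [← hpc]; exact Finset.mem_insert_of_mem (anc_trans hanc0 hanc _ k rfl c hck hp)
  have hrA : r ∉ Finset.univ \ A := by
    intro h
    exact (Finset.mem_sdiff.mp h).2 (Finset.mem_insert_self _ _)
  have CA := claimA hanc hcont hpos hmarg1 _ (Finset.univ \ A) rfl hgoodA hrA
  have hsetA : (Finset.univ.erase r) \ (Finset.univ \ A) = anc k := by
    ext a
    constructor
    · intro ha
      obtain ⟨h1, h2⟩ := Finset.mem_sdiff.mp ha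
      have har := (Finset.mem_erase.mp h1).1
      have haA : a ∈ A := by
        by_contra haA
        exact h2 (Finset.mem_sdiff.mpr ⟨Finset.mem_univ a, haA⟩)
      exact (Finset.mem_insert.mp haA).resolve_left har
    · intro ha
      refine Finset.mem_sdiff.mpr
        ⟨Finset.mem_erase.mpr ⟨fun hr => hrk (hr ▸ ha), Finset.mem_univ a⟩, ?_⟩
      intro h
      exact (Finset.mem_sdiff.mp h).2 (Finset.mem_insert_of_mem ha)
  rw [hsetA] at CA
  -- Claim B applied to `v = k`
  have CB := claimB hanc0 hanc hcont hpos hmarg2 k _ k hkA rfl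
  rw [Finset.sdiff_self] at CB
  have hik : insert k (∅ : Finset (Fin d)) = {k} := rfl
  rw [hik, ← Finset.erase_eq, ← hA] at CB
  -- Split `univ` into the three pieces
  have hd1 : Disjoint ({k} : Finset (Fin d)) ((A.erase k) ∪ (Finset.univ \ A)) := by
    simp only [Finset.disjoint_union_right, Finset.disjoint_singleton_left]
    exact ⟨Finset.notMem_erase _ _, fun h => (Finset.mem_sdiff.mp h).2 hkA⟩
  have hd2 : Disjoint (A.erase k) (Finset.univ \ A) := by
    rw [Finset.disjoint_left]
    intro a ha h
    exact (Finset.mem_sdiff.mp h).2 (Finset.mem_of_mem_erase ha)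
  have huniv : ({k} : Finset (Fin d)) ∪ ((A.erase k) ∪ (Finset.univ \ A)) = Finset.univ := by
    ext a
    simp only [Finset.mem_union, Finset.mem_singleton, Finset.mem_erase, Finset.mem_sdiff,
      Finset.mem_univ, true_and, iff_true]
    by_cases hak : a = k
    · exact Or.inl hak
    · by_cases haA : a ∈ A
      · exact Or.inr (Or.inl ⟨hak, haA⟩)
      · exact Or.inr (Or.inr haA)
  rw [volume_pi, lintegral_eq_lmarginal_univ (fun _ => (0:ℝ)), ← huniv,
    lmarginal_union _ _ hmeasF hd1, lmarginal_union _ _ hmeasF hd2,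
    lmarginal_pull (fun h => (Finset.mem_sdiff.mp h).2 hkA) _, CA,
    lmarginal_pull (Finset.notMem_erase _ _) _, CB, lmarginal_singleton]
  have hint : ∀ t : ℝ, (Set.Ioi (1:ℝ)).indicator (fun _ => (1:ℝ≥0∞))
      (Function.update (fun _ => (0:ℝ)) k t k) * Phi lamE par k ∅
        (Function.update (fun _ => (0:ℝ)) k t)
      = (Set.Ioi (1:ℝ)).indicator (fun t => ENNReal.ofReal ((t^2)⁻¹)) t := by
    intro t
    rw [Function.update_self]
    unfold Phi
    rw [Finset.prod_empty, mul_one, Function.update_self]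
    by_cases h1 : 1 < t
    · rw [Set.indicator_of_mem (mem_Ioi.mpr h1), Set.indicator_of_mem (mem_Ioi.mpr h1),
        rootF_of_pos (lt_trans one_pos h1), one_mul]
    · rw [Set.indicator_of_notMem (fun h => h1 (mem_Ioi.mp h)),
        Set.indicator_of_notMem (fun h => h1 (mem_Ioi.mp h)), zero_mul]
  simp_rw [hint]
  rw [lintegral_indicator measurableSet_Ioi]
  have hEq : EqOn (fun t : ℝ => t ^ (-2:ℝ)) (fun t : ℝ => (t^2)⁻¹) (Ioi 1) := by
    intro t ht
    have h0 : (0:ℝ) < t := lt_trans one_pos (mem_Ioi.mp ht)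
    simp only
    rw [Real.rpow_neg h0.le, show ((2:ℝ)) = ((2:ℕ):ℝ) by norm_num, Real.rpow_natCast]
  have hInt : IntegrableOn (fun t : ℝ => (t^2)⁻¹) (Ioi 1) :=
    (integrableOn_Ioi_rpow_of_lt (by norm_num : (-2:ℝ) < -1) one_pos).congr_fun hEq
      measurableSet_Ioi
  have hval : ∫ t in Ioi (1:ℝ), (t^2)⁻¹ = 1 := by
    rw [← setIntegral_congr_fun measurableSet_Ioi hEq,
      integral_Ioi_rpow_of_lt (by norm_num : (-2:ℝ) < -1) one_pos]
    norm_num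
  rw [← ofReal_integral_eq_lintegral_ofReal hInt
      ((ae_restrict_iff' measurableSet_Ioi).mpr (ae_of_all _ (fun t _ => by positivity))),
    hval, ENNReal.ofReal_one]


lemma Phi_pos_eq {lamE : Fin d → ℝ → ℝ → ℝ} {par : Fin d → Fin d} {rt : Fin d}
    {s : Finset (Fin d)} (y : Fin d → ℝ) (hy : ∀ j, 0 < y j)
    (hnn : ∀ i ∈ s, 0 ≤ lamE i (y (par i)) (y i)) :
    Phi lamE par rt s y = ENNReal.ofReal
      (((y rt)^2)⁻¹ * ∏ i ∈ s, (lamE i (y (par i)) (y i) * ((y (par i)))^2)) := by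
  unfold Phi
  rw [rootF_of_pos (hy rt)]
  have he : ∀ i ∈ s, edgeF lamE par i y
      = ENNReal.ofReal (lamE i (y (par i)) (y i) * ((y (par i)))^2) := by
    intro i hi
    unfold edgeF
    rw [Set.indicator_of_mem (show ((y (par i), y i)) ∈ {p : ℝ × ℝ | 0 < p.1 ∧ 0 < p.2} from ⟨hy _, hy _⟩)]
  rw [Finset.prod_congr rfl he,
    ← ENNReal.ofReal_prod_of_nonneg (fun i hi => mul_nonneg (hnn i hi) (sq_nonneg _)),
    ← ENNReal.ofReal_mul (by positivity)]

lemma lam_formula {lamE : Fin d → ℝ → ℝ → ℝ} {r : Fin d} {par : Fin d → Fin d}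
    (y : Fin d → ℝ) (hy : ∀ j, 0 < y j) :
    (∏ i ∈ Finset.univ.erase r,
        (lamE i (y (par i)) (y i) / (((y (par i)) ^ 2)⁻¹ * ((y i) ^ 2)⁻¹))) *
      ∏ i : Fin d, ((y i) ^ 2)⁻¹
    = ((y r)^2)⁻¹ * ∏ i ∈ Finset.univ.erase r,
        (lamE i (y (par i)) (y i) * ((y (par i)))^2) := by
  have h1 : ∀ i ∈ Finset.univ.erase r,
      lamE i (y (par i)) (y i) / (((y (par i)) ^ 2)⁻¹ * ((y i) ^ 2)⁻¹)
      = (lamE i (y (par i)) (y i) * ((y (par i)))^2) * ((y i))^2 := by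
    intro i _
    rw [div_eq_mul_inv, mul_inv, inv_inv, inv_inv]
    ring
  rw [Finset.prod_congr rfl h1, Finset.prod_mul_distrib,
    ← Finset.mul_prod_erase Finset.univ (fun i => ((y i)^2)⁻¹) (Finset.mem_univ r)]
  have h2 : (∏ i ∈ Finset.univ.erase r, ((y i))^2)
      * ∏ i ∈ Finset.univ.erase r, (((y i))^2)⁻¹ = 1 := by
    rw [← Finset.prod_mul_distrib]
    apply Finset.prod_eq_one
    intro i _
    exact mul_inv_cancel₀ (by have := hy i; positivity)
  rw [mul_mul_mul_comm, h2, mul_one, mul_comm]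

end TreeAux


/-- Gluing valid bivariate exponent measure densities along the
edges of a tree (rooted at `r`, edges `(par i, i)` for `i ≠ r`, with ancestor
sets `anc`) yields a function
`λ(y) = ∏_{{i,j}∈E} λ_{ij}(y_i,y_j)/(y_i⁻² y_j⁻²) · ∏_{i∈V} y_i⁻²` that is
homogeneous of order `-(d+1)` and has unit mass on each region `{y_i > 1}`. -/
theorem tree_glued_exponent_density_valid (d : ℕ) (hd : 1 ≤ d)
    (r : Fin d) (par : Fin d → Fin d) (anc : Fin d → Finset (Fin d))
    (hpar : par r = r) (hanc0 : anc r = ∅)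
    (hanc : ∀ i, i ≠ r →
      anc i = insert i (anc (par i)) ∧ i ∉ anc (par i) ∧ r ∉ anc i)
    (lamE : Fin d → ℝ → ℝ → ℝ)
    (hpos : ∀ i, i ≠ r → ∀ a b : ℝ, 0 < a → 0 < b → 0 < lamE i a b)
    (hcont : ∀ i, i ≠ r →
      ContinuousOn (fun p : ℝ × ℝ => lamE i p.1 p.2) {p | 0 < p.1 ∧ 0 < p.2})
    (hhom : ∀ i, i ≠ r → ∀ t a b : ℝ, 0 < t → 0 < a → 0 < b →
      lamE i (t * a) (t * b) = (t ^ 3)⁻¹ * lamE i a b)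
    (hmarg1 : ∀ i, i ≠ r → ∀ a : ℝ, 0 < a →
      ∫ b in Ioi (0:ℝ), lamE i a b = (a ^ 2)⁻¹)
    (hmarg2 : ∀ i, i ≠ r → ∀ b : ℝ, 0 < b →
      ∫ a in Ioi (0:ℝ), lamE i a b = (b ^ 2)⁻¹)
    (lam : (Fin d → ℝ) → ℝ)
    (hlamdef : ∀ y : Fin d → ℝ, (∀ j, 0 < y j) →
      lam y = (∏ i ∈ Finset.univ.erase r,
          (lamE i (y (par i)) (y i) / (((y (par i)) ^ 2)⁻¹ * ((y i) ^ 2)⁻¹))) *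
        ∏ i : Fin d, ((y i) ^ 2)⁻¹) :
    (∀ i : Fin d,
      ∫ y in {y : Fin d → ℝ | (∀ j, 0 < y j) ∧ 1 < y i}, lam y = 1) ∧
    (∀ t : ℝ, 0 < t → ∀ y : Fin d → ℝ, (∀ j, 0 < y j) →
      lam (t • y) = (t ^ (d + 1))⁻¹ * lam y) := by
  constructor
  · -- normalization
    intro k
    set S := {y : Fin d → ℝ | (∀ j, 0 < y j) ∧ 1 < y k} with hS
    have hSsub : S = {y : Fin d → ℝ | ∀ j, 0 < y j} ∩ {y : Fin d → ℝ | 1 < y k} := rfl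
    have hSopen : IsOpen S := by
      rw [hSsub]
      refine IsOpen.inter ?_ ((isOpen_Ioi).preimage (continuous_apply k))
      have h : {y : Fin d → ℝ | ∀ j, 0 < y j}
          = ⋂ j, (fun y : Fin d → ℝ => y j) ⁻¹' (Set.Ioi 0) := by
        ext y; simp [Set.mem_iInter]
      rw [h]
      exact isOpen_iInter_of_finite (fun j => (isOpen_Ioi).preimage (continuous_apply j))
    have hSmeas := hSopen.measurableSet
    set fR : (Fin d → ℝ) → ℝ := fun y => ((y r)^2)⁻¹ *
      ∏ i ∈ Finset.univ.erase r, (lamE i (y (par i)) (y i) * ((y (par i)))^2) with hfR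
    have hEqOn : EqOn lam (S.indicator fR) S := by
      intro y hy
      rw [Set.indicator_of_mem hy, hlamdef y hy.1, hfR]
      exact lam_formula y hy.1
    rw [setIntegral_congr_fun hSmeas hEqOn]
    -- measurability of the indicator function
    have hcontR : ContinuousOn fR S := by
      apply ContinuousOn.mul
      · exact (((continuous_apply r).pow 2).continuousOn).inv₀
          (fun y hy => pow_ne_zero 2 (hy.1 r).ne')
      · apply continuousOn_finset_prod
        intro i hi
        have hir := (Finset.mem_erase.mp hi).1
        apply ContinuousOn.mul
        · apply (hcont i hir).comp
            (Continuous.continuousOn (by continuity :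
              Continuous (fun y : Fin d → ℝ => (y (par i), y i))))
          intro y hy
          exact ⟨hy.1 _, hy.1 _⟩
        · exact ((continuous_apply (par i)).pow 2).continuousOn
    have hmR : Measurable (S.indicator fR) := by
      have hm := hcontR.measurable_piecewise (g := fun _ => (0:ℝ)) continuousOn_const hSmeas
      have heq : S.indicator fR = S.piecewise fR (fun _ => 0) := (Set.piecewise_eq_indicator).symm
      rw [heq]; exact hm
    have hnn : ∀ y, 0 ≤ S.indicator fR y := by
      intro y
      by_cases hy : y ∈ S
      · rw [Set.indicator_of_mem hy]
        refine mul_nonneg (by positivity) (Finset.prod_nonneg ?_)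
        intro i hi
        have hir := (Finset.mem_erase.mp hi).1
        exact mul_nonneg (hpos i hir _ _ (hy.1 _) (hy.1 _)).le (sq_nonneg _)
      · rw [Set.indicator_of_notMem hy]
    rw [integral_eq_lintegral_of_nonneg_ae (ae_of_all _ hnn)
      hmR.aestronglyMeasurable.restrict]
    have e1 : S.indicator (fun y => ENNReal.ofReal (S.indicator fR y))
        = (fun y => ENNReal.ofReal (S.indicator fR y)) := by
      funext y
      by_cases hy : y ∈ S
      · rw [Set.indicator_of_mem hy]
      · rw [Set.indicator_of_notMem hy, Set.indicator_of_notMem hy, ENNReal.ofReal_zero]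
    have hlift : (fun y => ENNReal.ofReal (S.indicator fR y))
        = fun y => (Set.Ioi (1:ℝ)).indicator (fun _ => (1:ℝ≥0∞)) (y k)
            * Phi lamE par r (Finset.univ.erase r) y := by
      funext y
      by_cases hy : y ∈ S
      · rw [Set.indicator_of_mem hy, Set.indicator_of_mem (mem_Ioi.mpr hy.2), one_mul,
          Phi_pos_eq y hy.1
            (fun i hi => (hpos i (Finset.mem_erase.mp hi).1 _ _ (hy.1 _) (hy.1 _)).le), hfR]
      · rw [Set.indicator_of_notMem hy, ENNReal.ofReal_zero]
        by_cases h1 : ∀ j, 0 < y j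
        · have h2 : ¬ 1 < y k := fun h => hy ⟨h1, h⟩
          rw [Set.indicator_of_notMem (fun h => h2 (mem_Ioi.mp h)), zero_mul]
        · push_neg at h1
          obtain ⟨j, hj⟩ := h1
          rw [Phi_eq_zero (not_lt.mpr hj)
            (by
              by_cases hjr : j = r
              · exact Or.inl hjr
              · exact Or.inr (Finset.mem_erase.mpr ⟨hjr, Finset.mem_univ j⟩)), mul_zero]
    rw [← lintegral_indicator hSmeas, e1, hlift,
      assembly hanc0 hanc hcont hpos hmarg1 hmarg2 k, ENNReal.toReal_one]
  · -- homogeneity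
    intro t ht y hy
    have htne : t ≠ 0 := ht.ne'
    have hty : ∀ j, 0 < (t • y) j := fun j => mul_pos ht (hy j)
    rw [hlamdef _ hty, hlamdef _ hy]
    have hsmul : ∀ j, (t • y) j = t * y j := fun j => rfl
    have hterm : ∀ i ∈ Finset.univ.erase r,
        lamE i ((t • y) (par i)) ((t • y) i)
          / ((((t • y) (par i)) ^ 2)⁻¹ * (((t • y) i) ^ 2)⁻¹)
        = t * (lamE i (y (par i)) (y i) / (((y (par i)) ^ 2)⁻¹ * ((y i) ^ 2)⁻¹)) := by
      intro i hi
      have hir := (Finset.mem_erase.mp hi).1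
      have ha := hy (par i)
      have hb := hy i
      have hane : y (par i) ≠ 0 := ha.ne'
      have hbne : y i ≠ 0 := hb.ne'
      rw [hsmul, hsmul, hhom i hir t _ _ ht ha hb]
      field_simp
    have h2 : ∀ i : Fin d, (((t • y) i) ^ 2)⁻¹ = (t^2)⁻¹ * ((y i) ^ 2)⁻¹ := by
      intro i
      rw [hsmul, mul_pow, mul_inv]
    rw [Finset.prod_congr rfl hterm, Finset.prod_congr rfl (fun i _ => h2 i),
      Finset.prod_mul_distrib, Finset.prod_mul_distrib, Finset.prod_const, Finset.prod_const]
    have hcard1 : (Finset.univ.erase r).card = d - 1 := by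
      rw [Finset.card_erase_of_mem (Finset.mem_univ r), Finset.card_univ, Fintype.card_fin]
    have hcard2 : (Finset.univ : Finset (Fin d)).card = d := by
      rw [Finset.card_univ, Fintype.card_fin]
    rw [hcard1, hcard2]
    have key : t^(d-1) * ((t^2)⁻¹)^d = (t^(d+1))⁻¹ := by
      have h3 : t ^ (2*d) = t^(d-1) * t^(d+1) := by
        rw [← pow_add]
        congr 1
        omega
      rw [inv_pow, ← pow_mul, h3, mul_inv, ← mul_assoc,
        mul_inv_cancel₀ (pow_ne_zero _ htne), one_mul]
    calc (t ^ (d-1) * ∏ i ∈ Finset.univ.erase r,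
            (lamE i (y (par i)) (y i) / (((y (par i)) ^ 2)⁻¹ * ((y i) ^ 2)⁻¹)))
          * (((t^2)⁻¹)^d * ∏ i : Fin d, ((y i) ^ 2)⁻¹)
        = (t^(d-1) * ((t^2)⁻¹)^d) *
            ((∏ i ∈ Finset.univ.erase r,
              (lamE i (y (par i)) (y i) / (((y (par i)) ^ 2)⁻¹ * ((y i) ^ 2)⁻¹)))
            * ∏ i : Fin d, ((y i) ^ 2)⁻¹) := by ring
      _ = (t ^ (d + 1))⁻¹ *
            ((∏ i ∈ Finset.univ.erase r,
              (lamE i (y (par i)) (y i) / (((y (par i)) ^ 2)⁻¹ * ((y i) ^ 2)⁻¹)))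
            * ∏ i : Fin d, ((y i) ^ 2)⁻¹) := by rw [key]
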